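/- Integrality of the odd index functional: let A : ℝ → Matrix n n ℂ be a Schwartz function such that I + A(t) is invertible for every t ∈ ℝ (I the identity matrix). Then the function t ↦ tr((I + A(t))⁻¹ · A′(t)) is integrable on ℝ and ind(I+A) := (1/(2πi)) ∫_ℝ tr((I + A(t))⁻¹ · A′(t)) dt is an integer. -/

import Mathlib

/-!
STATEMENT 3: Integrality of the odd index functional: for a Schwartz family
`A : ℝ → Matrix n n ℂ` with `I + A(t)` invertible for all `t`, the function
`t ↦ tr((I + A(t))⁻¹ · A′(t))` is integrable and
`(1/(2πi)) ∫ tr((I + A(t))⁻¹ A′(t)) dt` is an integer.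
-/

attribute [local instance] Matrix.normedAddCommGroup Matrix.normedSpace

open MeasureTheory

noncomputable section

namespace OddIndexAux

open Matrix Filter

variable {n : ℕ}

lemma trace_adjugate_mul_eq (M B : Matrix (Fin n) (Fin n) ℂ) :
    Matrix.trace (Matrix.adjugate M * B) = ∑ j, (Matrix.updateRow M j (B j)).det := by
  have key : ∀ j : Fin n, (Matrix.updateRow M j (B j)).det
      = ∑ i, B j i * (M.updateRow j (Pi.single i 1)).det := by
    intro j
    have hBj : B j = ∑ i, B j i • (Pi.single i 1 : Fin n → ℂ) := by
      funext k
      simp [Pi.single_apply, Finset.sum_apply, mul_comm]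
    calc (Matrix.updateRow M j (B j)).det
        = (Matrix.detRowAlternating
            (Function.update M j (∑ i, B j i • (Pi.single i 1 : Fin n → ℂ)))) := by
          rw [← hBj]; rfl
      _ = ∑ i, Matrix.detRowAlternating
            (Function.update M j (B j i • (Pi.single i 1 : Fin n → ℂ))) :=
          MultilinearMap.map_update_sum _ _ _ _ _
      _ = ∑ i, B j i * (M.updateRow j (Pi.single i 1)).det := by
          refine Finset.sum_congr rfl fun i _ => ?_
          exact Matrix.det_updateRow_smul M j (B j i) (Pi.single i 1)
  simp only [Matrix.trace, Matrix.diag, Matrix.mul_apply, Matrix.adjugate_apply, key]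
  rw [Finset.sum_comm]
  exact Finset.sum_congr rfl fun j _ => Finset.sum_congr rfl fun i _ => mul_comm _ _

lemma sum_det_updateRow_eq (M B : Matrix (Fin n) (Fin n) ℂ) :
    ∑ i, (Matrix.updateRow M i (B i)).det
      = ∑ σ : Equiv.Perm (Fin n), (Equiv.Perm.sign σ : ℂ) *
          ∑ i, (∏ j ∈ Finset.univ.erase i, M (σ j) j) * B (σ i) i := by
  simp only [Matrix.det_apply']
  rw [Finset.sum_comm]
  refine Finset.sum_congr rfl fun σ _ => ?_
  rw [← Finset.mul_sum]
  congr 1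
  have step1 : ∀ i : Fin n, (∏ j, (Matrix.updateRow M i (B i)) (σ j) j)
      = B i (σ⁻¹ i) * ∏ j ∈ Finset.univ.erase (σ⁻¹ i), M (σ j) j := by
    intro i
    rw [← Finset.mul_prod_erase Finset.univ _ (Finset.mem_univ (σ⁻¹ i))]
    congr 1
    · rw [Equiv.Perm.inv_def, Equiv.apply_symm_apply, Matrix.updateRow_self]
    · refine Finset.prod_congr rfl fun j hj => ?_
      have hji : j ≠ σ⁻¹ i := (Finset.mem_erase.mp hj).1
      have : σ j ≠ i := fun h => hji (by simp [← h])
      rw [Matrix.updateRow_ne this]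
  simp only [step1]
  rw [← Equiv.sum_comp σ (fun i => B i (σ⁻¹ i) * ∏ j ∈ Finset.univ.erase (σ⁻¹ i), M (σ j) j)]
  refine Finset.sum_congr rfl fun k _ => ?_
  simp [mul_comm]

lemma hasDerivAt_det_aux {M : ℝ → Matrix (Fin n) (Fin n) ℂ} {B : Matrix (Fin n) (Fin n) ℂ}
    {t : ℝ} (h : ∀ i j, HasDerivAt (fun s => M s i j) (B i j) t) :
    HasDerivAt (fun s => (M s).det) (∑ i, (Matrix.updateRow (M t) i (B i)).det) t := by
  rw [sum_det_updateRow_eq]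
  simp only [Matrix.det_apply']
  refine HasDerivAt.fun_sum fun σ _ => ?_
  have hp : HasDerivAt (fun s => ∏ i, M s (σ i) i)
      (∑ i, (∏ j ∈ Finset.univ.erase i, M t (σ j) j) • B (σ i) i) t :=
    HasDerivAt.fun_finset_prod (fun i _ => h (σ i) i)
  simpa [smul_eq_mul] using hp.const_mul ((Equiv.Perm.sign σ : ℂ))

/-- evaluation of a matrix entry as a continuous ℝ-linear map -/
def entryCLM (i j : Fin n) : Matrix (Fin n) (Fin n) ℂ →L[ℝ] ℂ :=
  LinearMap.toContinuousLinearMap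
    { toFun := fun M => M i j
      map_add' := fun _ _ => rfl
      map_smul' := fun _ _ => rfl }

lemma hasDerivAt_entry {A : ℝ → Matrix (Fin n) (Fin n) ℂ} {A' : Matrix (Fin n) (Fin n) ℂ}
    {t : ℝ} (h : HasDerivAt A A' t) (i j : Fin n) :
    HasDerivAt (fun s => A s i j) (A' i j) t :=
  ((entryCLM i j).hasFDerivAt.comp_hasDerivAt t h :)

lemma trace_mul_norm_bound (X Y : Matrix (Fin n) (Fin n) ℂ) (C : ℝ) (hC : 0 ≤ C)
    (hX : ‖X‖ ≤ C) : ‖Matrix.trace (X * Y)‖ ≤ (n^2 : ℝ) * C * ‖Y‖ := by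
  have h1 : ‖Matrix.trace (X * Y)‖ ≤ ∑ i : Fin n, ‖(X * Y) i i‖ :=
    norm_sum_le _ _
  have h2 : ∀ i : Fin n, ‖(X * Y) i i‖ ≤ (n : ℝ) * (C * ‖Y‖) := by
    intro i
    rw [Matrix.mul_apply]
    refine le_trans (norm_sum_le _ _) ?_
    have hk : ∀ k : Fin n, ‖X i k * Y k i‖ ≤ C * ‖Y‖ := by
      intro k
      rw [norm_mul]
      exact mul_le_mul (le_trans (Matrix.norm_entry_le_entrywise_sup_norm X) hX)
        (Matrix.norm_entry_le_entrywise_sup_norm Y) (norm_nonneg _) hC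
    calc ∑ k, ‖X i k * Y k i‖ ≤ ∑ _k : Fin n, C * ‖Y‖ := Finset.sum_le_sum fun k _ => hk k
      _ = (n : ℝ) * (C * ‖Y‖) := by simp [Finset.sum_const, mul_comm]
  calc ‖Matrix.trace (X * Y)‖ ≤ ∑ _i : Fin n, (n : ℝ) * (C * ‖Y‖) :=
        le_trans h1 (Finset.sum_le_sum fun i _ => h2 i)
    _ = (n^2 : ℝ) * C * ‖Y‖ := by simp [Finset.sum_const]; ring

end OddIndexAux

open OddIndexAux Matrix Filter intervalIntegral

theorem odd_index_is_integer {n : ℕ}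
    (A : SchwartzMap ℝ (Matrix (Fin n) (Fin n) ℂ))
    (hinv : ∀ t : ℝ, IsUnit (1 + A t)) :
    Integrable (fun t : ℝ => Matrix.trace ((1 + A t)⁻¹ * deriv (⇑A) t)) ∧
      ∃ k : ℤ,
        (1 / (2 * Real.pi * Complex.I)) *
            ∫ t : ℝ, Matrix.trace ((1 + A t)⁻¹ * deriv (⇑A) t) = (k : ℂ) := by
  -- notation
  set φ : ℝ → ℂ := fun t : ℝ => Matrix.trace ((1 + A t)⁻¹ * deriv (⇑A) t) with hφdef
  -- basic facts
  have hda : ∀ t : ℝ, HasDerivAt (⇑A) (deriv (⇑A) t) t :=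
    fun t => (A.differentiable t).hasDerivAt
  have hA'eq : ⇑(SchwartzMap.derivCLM ℝ (Matrix (Fin n) (Fin n) ℂ) A) = deriv (⇑A) :=
    funext fun t => SchwartzMap.derivCLM_apply ℝ A t
  have cA' : Continuous (deriv (⇑A)) := hA'eq ▸ (SchwartzMap.derivCLM ℝ (Matrix (Fin n) (Fin n) ℂ) A).continuous
  letI : ContinuousENorm (Matrix (Fin n) (Fin n) ℂ) := SeminormedAddGroup.toContinuousENorm
  have hA'int : Integrable (deriv (⇑A)) volume := hA'eq ▸ (SchwartzMap.derivCLM ℝ (Matrix (Fin n) (Fin n) ℂ) A).integrable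
  have hdet : ∀ t, IsUnit (1 + A t).det := fun t =>
    (Matrix.isUnit_iff_isUnit_det _).mp (hinv t)
  have hdetne : ∀ t, (1 + A t).det ≠ 0 := fun t => (hdet t).ne_zero
  have hinvdef : ∀ t, (1 + A t)⁻¹ = ((1 + A t).det)⁻¹ • Matrix.adjugate (1 + A t) := fun t => by
    rw [Matrix.inv_def, Ring.inverse_eq_inv']
  have c1A : Continuous (fun t => 1 + A t) := continuous_const.add A.continuous
  have cInv : Continuous (fun t => (1 + A t)⁻¹) := by
    simp only [hinvdef]
    exact ((c1A.matrix_det).inv₀ hdetne).smul c1A.matrix_adjugate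
  have cφ : Continuous φ := (cInv.matrix_mul cA').matrix_trace
  -- behaviour at infinity
  have hA0 : Tendsto (⇑A) (cocompact ℝ) (nhds 0) := zero_at_infty A
  have h1A : Tendsto (fun t => 1 + A t) (cocompact ℝ) (nhds 1) := by
    simpa using (tendsto_const_nhds.add hA0 :
      Tendsto (fun t => 1 + A t) (cocompact ℝ) (nhds (1 + 0)))
  have hgInv : Tendsto (fun t => (1 + A t)⁻¹) (cocompact ℝ) (nhds 1) := by
    have hc : ContinuousAt
        (fun M : Matrix (Fin n) (Fin n) ℂ => (M.det)⁻¹ • Matrix.adjugate M) 1 :=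
      (((continuous_id.matrix_det).continuousAt).inv₀ (by simp)).smul
        ((continuous_id.matrix_adjugate).continuousAt)
    have h := hc.tendsto.comp h1A
    simp only [Function.comp_def, Matrix.det_one, inv_one, Matrix.adjugate_one, one_smul] at h
    simpa [hinvdef] using h
  -- uniform bound on the inverse
  obtain ⟨C, hC0, hC⟩ : ∃ C : ℝ, 0 ≤ C ∧ ∀ t, ‖(1 + A t)⁻¹‖ ≤ C := by
    have hev : ∀ᶠ t in cocompact ℝ,
        ‖(1 + A t)⁻¹‖ ≤ ‖(1 : Matrix (Fin n) (Fin n) ℂ)‖ + 1 := by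
      filter_upwards [hgInv.norm.eventually (eventually_le_nhds (lt_add_one _))] with t ht using ht
    obtain ⟨K, hK, hKsub⟩ := mem_cocompact.mp hev
    obtain ⟨C₁, hC₁⟩ := hK.exists_bound_of_continuousOn cInv.continuousOn
    refine ⟨max (‖(1 : Matrix (Fin n) (Fin n) ℂ)‖ + 1) C₁ ⊔ 0, le_max_right _ _, fun t => ?_⟩
    rcases em (t ∈ K) with h | h
    · exact le_trans (hC₁ t h) (le_trans (le_max_right _ _) (le_max_left _ _))
    · exact le_trans (hKsub h) (le_trans (le_max_left _ _) (le_max_left _ _))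
  -- integrability
  have hφint : Integrable φ volume := by
    refine ((hA'int.norm.const_mul ((n^2 : ℝ) * C)).mono' cφ.aestronglyMeasurable ?_)
    filter_upwards with t
    simpa [mul_assoc] using trace_mul_norm_bound ((1 + A t)⁻¹) (deriv (⇑A) t) C hC0 (hC t)
  refine ⟨hφint, ?_⟩
  -- derivative of the determinant
  have hf' : ∀ t, HasDerivAt (fun s => (1 + A s).det) ((1 + A t).det * φ t) t := by
    intro t
    have hent : ∀ i j, HasDerivAt (fun s => (1 + A s) i j) (deriv (⇑A) t i j) t := by
      intro i j
      have h := (hasDerivAt_entry (hda t) i j).const_add ((1 : Matrix (Fin n) (Fin n) ℂ) i j)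
      exact h
    have h1 := hasDerivAt_det_aux (M := fun s => 1 + A s) (B := deriv (⇑A) t) hent
    rw [← trace_adjugate_mul_eq] at h1
    have hadj : Matrix.adjugate (1 + A t) = (1 + A t).det • (1 + A t)⁻¹ := by
      rw [hinvdef t, smul_smul, mul_inv_cancel₀ (hdetne t), one_smul]
    rw [hadj, Matrix.smul_mul, Matrix.trace_smul, smul_eq_mul] at h1
    exact h1
  -- the primitive of φ
  set F : ℝ → ℂ := fun t => ∫ s in (0:ℝ)..t, φ s with hFdef
  have hF : ∀ t, HasDerivAt F (φ t) t := fun t =>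
    intervalIntegral.integral_hasDerivAt_right hφint.intervalIntegrable
      (cφ.stronglyMeasurableAtFilter volume (nhds t)) cφ.continuousAt
  -- det (1 + A t) = det (1 + A 0) * exp (F t)
  have hh : ∀ t, HasDerivAt (fun s => (1 + A s).det * Complex.exp (-F s)) 0 t := by
    intro t
    have he : HasDerivAt (fun s => Complex.exp (-F s)) (Complex.exp (-F t) * (-φ t)) t :=
      ((hF t).neg).cexp
    have h := (hf' t).fun_mul he
    convert h using 1
    · rfl
    · ring
  have hcon : ∀ t, (1 + A t).det * Complex.exp (-F t) = (1 + A 0).det := by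
    intro t
    have h := is_const_of_deriv_eq_zero (f := fun s => (1 + A s).det * Complex.exp (-F s))
      (fun x => (hh x).differentiableAt) (fun x => (hh x).deriv) t 0
    simpa [hFdef, intervalIntegral.integral_same] using h
  have hft : ∀ t, (1 + A t).det = (1 + A 0).det * Complex.exp (F t) := by
    intro t
    calc (1 + A t).det
        = (1 + A t).det * (Complex.exp (-F t) * Complex.exp (F t)) := by
          rw [← Complex.exp_add]; simp
      _ = ((1 + A t).det * Complex.exp (-F t)) * Complex.exp (F t) := by ring
      _ = (1 + A 0).det * Complex.exp (F t) := by rw [hcon t]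
  -- limits at ±∞
  have hdetTendsto : Tendsto (fun t => (1 + A t).det) (cocompact ℝ) (nhds 1) := by
    have h := ((continuous_id.matrix_det).continuousAt
      (x := (1 : Matrix (Fin n) (Fin n) ℂ))).tendsto.comp h1A
    simpa [Function.comp_def, Matrix.det_one] using h
  have hcoBot : atBot ≤ cocompact ℝ := by
    rw [cocompact_eq_atBot_atTop]; exact le_sup_left
  have hcoTop : atTop ≤ cocompact ℝ := by
    rw [cocompact_eq_atBot_atTop]; exact le_sup_right
  set Lp : ℂ := ∫ s in Set.Ioi (0:ℝ), φ s with hLp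
  set Lm : ℂ := ∫ s in Set.Iic (0:ℝ), φ s with hLm
  have hFTop : Tendsto F atTop (nhds Lp) :=
    intervalIntegral_tendsto_integral_Ioi 0 hφint.integrableOn tendsto_id
  have hFBot : Tendsto F atBot (nhds (-Lm)) := by
    have h := intervalIntegral_tendsto_integral_Iic 0 hφint.integrableOn tendsto_id
    have hFeq : F = fun t => -∫ s in t..(0:ℝ), φ s :=
      funext fun t => intervalIntegral.integral_symm t 0
    rw [hFeq]
    exact h.neg
  have hexpeq : (fun t => Complex.exp (F t)) = fun t => (1 + A t).det / (1 + A 0).det := by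
    funext t
    rw [hft t]
    field_simp [hdetne 0]
  have hdivTop : Tendsto (fun t => Complex.exp (F t)) atTop (nhds (1 / (1 + A 0).det)) := by
    rw [hexpeq]
    exact (hdetTendsto.mono_left hcoTop).div_const _
  have hdivBot : Tendsto (fun t => Complex.exp (F t)) atBot (nhds (1 / (1 + A 0).det)) := by
    rw [hexpeq]
    exact (hdetTendsto.mono_left hcoBot).div_const _
  have hexpTop : Complex.exp Lp = 1 / (1 + A 0).det :=
    tendsto_nhds_unique ((Complex.continuous_exp.continuousAt.tendsto).comp hFTop) hdivTop
  have hexpBot : Complex.exp (-Lm) = 1 / (1 + A 0).det :=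
    tendsto_nhds_unique ((Complex.continuous_exp.continuousAt.tendsto).comp hFBot) hdivBot
  -- the total integral is in 2πiℤ
  have hsplit : Lm + Lp = ∫ t : ℝ, φ t :=
    integral_Iic_add_Ioi hφint.integrableOn hφint.integrableOn
  have hexp1 : Complex.exp (Lm + Lp) = 1 := by
    have : Complex.exp (Lm + Lp) = Complex.exp Lm * Complex.exp Lp := Complex.exp_add _ _
    rw [this, hexpTop, ← hexpBot, ← Complex.exp_add]
    simp
  obtain ⟨k, hk⟩ := Complex.exp_eq_one_iff.mp hexp1
  refine ⟨k, ?_⟩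
  have h2πi : (2 * (Real.pi : ℂ) * Complex.I) ≠ 0 := by
    simp [Real.pi_ne_zero, Complex.I_ne_zero, Complex.ofReal_eq_zero]
  rw [← hsplit, hk]
  field_simp

end
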